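/- arXiv:1403.6064 — 2 statements merged into one kernel-verified Lean document; each statement's English description precedes it below -/
import Mathlib

section
/- Let $p \geq 2$, $1 \leq s < p^*$, and $\beta = \frac{p+s-ps}{ps}$. For every $n \geq 2$, the weak $\ell_s$ norm of the finite sequence $(e_j/j^\beta)_{j=1}^n$ in $\ell_p^n$ satisfies $\sup_{\varphi \in B_{(\ell_p^n)^*}} \left(\sum_{j=1}^n |\varphi(e_j/j^\beta)|^s\right)^{1/s} < (1+\log n)^\beta$. -/
lemma harmonic_lt_one_add_log {n : ℕ} (hn : 2 ≤ n) :
    (harmonic n : ℝ) < 1 + Real.log n := by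
  obtain ⟨m, rfl⟩ : ∃ m, n = m + 1 := ⟨n - 1, by omega⟩
  have hm : 1 ≤ m := by omega
  have hm0 : (0 : ℝ) < m := by exact_mod_cast hm
  have hm1 : (0 : ℝ) < (m : ℝ) + 1 := by positivity
  have h1 : (harmonic m : ℝ) ≤ 1 + Real.log m := harmonic_le_one_add_log m
  have h2 : Real.log ((m : ℝ) / ((m : ℝ) + 1)) < (m : ℝ) / ((m : ℝ) + 1) - 1 := by
    apply Real.log_lt_sub_one_of_pos (by positivity)
    intro h
    have h' : (m : ℝ) = (m : ℝ) + 1 := by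
      field_simp at h
      exact h
    linarith
  rw [Real.log_div hm0.ne' hm1.ne'] at h2
  have h3 : (m : ℝ) / ((m : ℝ) + 1) - 1 = -(((m : ℝ) + 1)⁻¹) := by field_simp; ring
  rw [h3] at h2
  have : (harmonic (m + 1) : ℝ) = (harmonic m : ℝ) + ((m : ℝ) + 1)⁻¹ := by
    rw [harmonic_succ]; push_cast; ring
  rw [this]
  push_cast
  linarith

/-- Let `p ≥ 2`, `1 ≤ s < p*` (with `q = p*` the conjugate exponent of `p`),
`β = (p+s-ps)/(ps)`, and `n ≥ 2`. Identifying the dual of `ℓ_p^n` with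
`ℓ_{p*}^n`, the weak `ℓ_s` norm of the sequence `(e_j/j^β)_{j=1}^n` in `ℓ_p^n`,
namely `sup { (∑_{j=1}^n (|φ_j|/j^β)^s)^{1/s} : ‖φ‖_{p*} ≤ 1 }`, is
`< (1 + log n)^β`. -/
theorem stmt1 (p q s β : ℝ) (n : ℕ) (hp : 2 ≤ p) (hq : 1 / p + 1 / q = 1)
    (hs1 : 1 ≤ s) (hs2 : s < q) (hβ : β = (p + s - p * s) / (p * s)) (hn : 2 ≤ n) :
    sSup {t : ℝ | ∃ φ : Fin n → ℝ, (∑ j, |φ j| ^ q) ^ (1 / q) ≤ 1 ∧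
        t = (∑ j, (|φ j| * ((j : ℝ) + 1) ^ (-β)) ^ s) ^ (1 / s)} <
      (1 + Real.log n) ^ β := by
  have hp0 : (0 : ℝ) < p := by linarith
  have hs0 : (0 : ℝ) < s := by linarith
  have hq0 : (0 : ℝ) < q := by
    have h1 : 1 / q = 1 - 1 / p := by linarith
    have h2 : 1 / p ≤ 1 / 2 := by
      apply one_div_le_one_div_of_le <;> linarith
    have : 0 < 1 / q := by rw [h1]; linarith
    exact (one_div_pos.mp this)
  have hβ' : β = 1 / s - 1 / q := by
    have h1 : 1 / q = 1 - 1 / p := by linarith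
    rw [hβ, h1]
    field_simp
    ring
  have hβpos : 0 < β := by
    rw [hβ']
    have : 1 / q < 1 / s := one_div_lt_one_div_of_lt hs0 hs2
    linarith
  -- harmonic number
  set H : ℝ := ∑ j : Fin n, ((j : ℝ) + 1)⁻¹ with hH
  have hHharm : H = (harmonic n : ℝ) := by
    rw [hH, harmonic]
    push_cast
    exact Fin.sum_univ_eq_sum_range (fun i => ((i:ℝ)+1)⁻¹) n
  have hHnn : 0 ≤ H := by
    apply Finset.sum_nonneg
    intro j _
    positivity
  have hHlt : H < 1 + Real.log n := by
    rw [hHharm]; exact harmonic_lt_one_add_log hn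
  -- conjugate exponents q/s and q/(q-s)
  have hqs : (0:ℝ) < q - s := by linarith
  have hconj : (q / s).HolderConjugate (q / (q - s)) := by
    rw [Real.holderConjugate_iff]
    constructor
    · rw [lt_div_iff₀ hs0]; linarith
    · field_simp; ring
  refine lt_of_le_of_lt (Real.sSup_le ?_ (Real.rpow_nonneg hHnn β)) ?_
  · rintro t ⟨φ, hφ, rfl⟩
    have hr0 : (0:ℝ) < q / (q - s) := by positivity
    -- rewrite each term
    have hterm : ∀ j : Fin n, (|φ j| * ((j : ℝ) + 1) ^ (-β)) ^ s
        = |φ j| ^ s * (((j : ℝ) + 1) ^ (-β)) ^ s := by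
      intro j
      exact Real.mul_rpow (abs_nonneg _) (Real.rpow_nonneg (by positivity) _)
    have hHolder := Real.inner_le_Lp_mul_Lq_of_nonneg (s := Finset.univ)
      (f := fun j : Fin n => |φ j| ^ s)
      (g := fun j : Fin n => (((j : ℝ) + 1) ^ (-β)) ^ s) hconj
      (fun i _ => Real.rpow_nonneg (abs_nonneg _) _)
      (fun i _ => Real.rpow_nonneg (Real.rpow_nonneg (by positivity) _) _)
    -- first factor
    have he1 : ∀ j : Fin n, (|φ j| ^ s) ^ (q / s) = |φ j| ^ q := by
      intro j
      rw [← Real.rpow_mul (abs_nonneg _)]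
      congr 1
      field_simp
    have hXnn : 0 ≤ ∑ j : Fin n, |φ j| ^ q :=
      Finset.sum_nonneg fun j _ => Real.rpow_nonneg (abs_nonneg _) _
    have hX1 : ∑ j : Fin n, |φ j| ^ q ≤ 1 := by
      have hXeq : ∑ j : Fin n, |φ j| ^ q
          = ((∑ j : Fin n, |φ j| ^ q) ^ (1 / q)) ^ q := by
        rw [← Real.rpow_mul hXnn, one_div, inv_mul_cancel₀ hq0.ne', Real.rpow_one]
      calc ∑ j : Fin n, |φ j| ^ q
          = ((∑ j : Fin n, |φ j| ^ q) ^ (1 / q)) ^ q := hXeq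
        _ ≤ 1 := Real.rpow_le_one (Real.rpow_nonneg hXnn _) hφ hq0.le
    have hfac1 : (∑ j : Fin n, (|φ j| ^ s) ^ (q / s)) ^ (1 / (q / s)) ≤ 1 := by
      rw [Finset.sum_congr rfl fun j _ => he1 j]
      exact Real.rpow_le_one hXnn hX1 (by positivity)
    -- second factor
    have he2 : ∀ j : Fin n, ((((j : ℝ) + 1) ^ (-β)) ^ s) ^ (q / (q - s))
        = ((j : ℝ) + 1)⁻¹ := by
      intro j
      have hj : (0:ℝ) ≤ (j : ℝ) + 1 := by positivity
      rw [← Real.rpow_mul hj, ← Real.rpow_mul hj]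
      rw [show -β * s * (q / (q - s)) = -1 by
        rw [hβ']; field_simp]
      exact Real.rpow_neg_one _
    have hfac2eq : (∑ j : Fin n, ((((j : ℝ) + 1) ^ (-β)) ^ s) ^ (q / (q - s)))
        = H := by
      rw [hH]
      exact Finset.sum_congr rfl fun j _ => he2 j
    rw [hfac2eq] at hHolder
    have hSnn : 0 ≤ ∑ j : Fin n, (|φ j| * ((j : ℝ) + 1) ^ (-β)) ^ s :=
      Finset.sum_nonneg fun j _ => Real.rpow_nonneg (by positivity) _
    have hbound : ∑ j : Fin n, (|φ j| * ((j : ℝ) + 1) ^ (-β)) ^ s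
        ≤ H ^ (1 / (q / (q - s))) := by
      calc ∑ j : Fin n, (|φ j| * ((j : ℝ) + 1) ^ (-β)) ^ s
          = ∑ j : Fin n, |φ j| ^ s * (((j : ℝ) + 1) ^ (-β)) ^ s :=
            Finset.sum_congr rfl fun j _ => hterm j
        _ ≤ (∑ j : Fin n, (|φ j| ^ s) ^ (q / s)) ^ (1 / (q / s))
              * H ^ (1 / (q / (q - s))) := hHolder
        _ ≤ 1 * H ^ (1 / (q / (q - s))) :=
            mul_le_mul_of_nonneg_right hfac1 (Real.rpow_nonneg hHnn _)
        _ = H ^ (1 / (q / (q - s))) := one_mul _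
    calc (∑ j : Fin n, (|φ j| * ((j : ℝ) + 1) ^ (-β)) ^ s) ^ (1 / s)
        ≤ (H ^ (1 / (q / (q - s)))) ^ (1 / s) :=
          Real.rpow_le_rpow hSnn hbound (by positivity)
      _ = H ^ β := by
          rw [← Real.rpow_mul hHnn]
          congr 1
          have h1 : q ≠ 0 := hq0.ne'
          have h2 : s ≠ 0 := hs0.ne'
          have h3 : q - s ≠ 0 := hqs.ne'
          rw [hβ']
          field_simp
  · exact Real.rpow_lt_rpow hHnn hHlt hβpos
end

section
/- Every Hamel basis of the Banach space $\mathcal{L}(^m\ell_p;\mathbb{K})$ ($1 \leq p < \infty$, $m \geq 1$) has cardinality exactly $\mathfrak{c}$, the cardinality of the continuum. -/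
open scoped ENNReal

noncomputable section Stmt15Aux

namespace Stmt15Aux

variable (p : ℝ≥0∞) [Fact (1 ≤ p)]

local notation "X" => lp (fun _ : ℕ => ℝ) p

lemma hp0 : p ≠ 0 := (zero_lt_one.trans_le (Fact.out : 1 ≤ p)).ne'

lemma abs_apply_le (x : X) (n : ℕ) : |x n| ≤ ‖x‖ := by
  simpa using lp.norm_apply_le_norm (hp0 p) x n

lemma summable_aux {t : ℝ} (ht0 : 0 ≤ t) (ht1 : t < 1) (x : X) :
    Summable (fun n : ℕ => t ^ n * x n) := by
  refine Summable.of_norm_bounded ((summable_geometric_of_lt_one ht0 ht1).mul_left ‖x‖) (fun n => ?_)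
  simp only [norm_mul, Real.norm_eq_abs, Real.norm_eq_abs, abs_pow, abs_of_nonneg ht0,
    mul_comm ‖x‖]
  exact mul_le_mul_of_nonneg_left (abs_apply_le p x n) (pow_nonneg ht0 n)

/-- The continuous linear functional `x ↦ ∑ tⁿ xₙ` on `ℓ_p`. -/
def L (t : ℝ) (ht : t ∈ Set.Ioo (0 : ℝ) 1) : X →L[ℝ] ℝ :=
  LinearMap.mkContinuous
    { toFun := fun x => ∑' n : ℕ, t ^ n * x n
      map_add' := fun x y => by
        have hx := summable_aux p ht.1.le ht.2 x
        have hy := summable_aux p ht.1.le ht.2 y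
        simp only [lp.coeFn_add, Pi.add_apply, mul_add]
        exact Summable.tsum_add hx hy
      map_smul' := fun c x => by
        simp only [lp.coeFn_smul, Pi.smul_apply, smul_eq_mul, RingHom.id_apply]
        rw [← tsum_mul_left]
        congr 1; funext n; ring }
    (1 - t)⁻¹
    (by
      intro x
      have hs : Summable (fun n : ℕ => t ^ n * x n) := summable_aux p ht.1.le ht.2 x
      have hg : Summable (fun n : ℕ => t ^ n) := summable_geometric_of_lt_one ht.1.le ht.2
      simp only [LinearMap.coe_mk, AddHom.coe_mk]
      calc ‖∑' n : ℕ, t ^ n * x n‖ ≤ ∑' n : ℕ, ‖t ^ n * x n‖ :=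
            norm_tsum_le_tsum_norm hs.norm
        _ ≤ ∑' n : ℕ, t ^ n * ‖x‖ := by
            refine Summable.tsum_le_tsum (fun n => ?_) hs.norm (hg.mul_right ‖x‖)
            rw [norm_mul, Real.norm_eq_abs, Real.norm_eq_abs, abs_pow,
              abs_of_nonneg ht.1.le]
            exact mul_le_mul_of_nonneg_left (abs_apply_le p x n) (pow_nonneg ht.1.le n)
        _ = (1 - t)⁻¹ * ‖x‖ := by
            rw [tsum_mul_right, tsum_geometric_of_lt_one ht.1.le ht.2])

lemma L_apply (t : ℝ) (ht : t ∈ Set.Ioo (0 : ℝ) 1) (x : X) :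
    L p t ht x = ∑' n : ℕ, t ^ n * x n := rfl

/-- The coordinate functional `x ↦ x 0`. -/
def coord0 : X →L[ℝ] ℝ :=
  LinearMap.mkContinuous
    { toFun := fun x => x 0
      map_add' := fun x y => by simp
      map_smul' := fun c x => by simp }
    1
    (fun x => by show ‖(x : ℕ → ℝ) 0‖ ≤ 1 * ‖x‖; simpa using abs_apply_le p x 0)

lemma coord0_apply (x : X) : coord0 p x = x 0 := rfl

lemma L_single (t : ℝ) (ht : t ∈ Set.Ioo (0 : ℝ) 1) (n : ℕ) :
    L p t ht (lp.single p n 1) = t ^ n := by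
  rw [L_apply]
  rw [tsum_eq_single n]
  · rw [lp.single_apply_self, mul_one]
  · intro k hk
    rw [lp.single_apply_ne p n _ hk, mul_zero]

/-- The multilinear form `x ↦ (∑ tⁿ (x 0)ₙ) * ∏_{i ≠ 0} (x i)₀`. -/
def phi (m : ℕ) (t : ℝ) (ht : t ∈ Set.Ioo (0 : ℝ) 1) :
    ContinuousMultilinearMap ℝ (fun _ : Fin m => X) ℝ :=
  (ContinuousMultilinearMap.mkPiAlgebra ℝ (Fin m) ℝ).compContinuousLinearMap
    (fun i => if (i : ℕ) = 0 then L p t ht else coord0 p)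

/-- The test tuple: `e_n` in slot `0`, `e_0` elsewhere. -/
def V (m n : ℕ) : Fin m → X :=
  fun i => if (i : ℕ) = 0 then lp.single p n 1 else lp.single p 0 1

lemma phi_V (m : ℕ) (hm : 1 ≤ m) (t : ℝ) (ht : t ∈ Set.Ioo (0 : ℝ) 1) (n : ℕ) :
    phi p m t ht (V p m n) = t ^ n := by
  have h0 : ((⟨0, hm⟩ : Fin m) : ℕ) = 0 := rfl
  rw [phi, ContinuousMultilinearMap.compContinuousLinearMap_apply,
    ContinuousMultilinearMap.mkPiAlgebra_apply]
  have : ∀ i : Fin m,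
      (if (i : ℕ) = 0 then L p t ht else coord0 p) (V p m n i)
        = if (i : ℕ) = 0 then t ^ n else 1 := by
    intro i
    by_cases hi : (i : ℕ) = 0
    · simp only [hi, if_true, V, L_single]
    · simp only [hi, if_false, V, coord0_apply, lp.single_apply_self]
  rw [Finset.prod_congr rfl (fun i _ => this i)]
  rw [Finset.prod_eq_single_of_mem (⟨0, hm⟩ : Fin m) (Finset.mem_univ _)]
  · simp
  · intro b _ hb
    have : (b : ℕ) ≠ 0 := by
      intro h
      exact hb (Fin.ext h)
    simp [this]

/-- Evaluation of a continuous multilinear form on the test tuples. -/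
def Ev (m : ℕ) :
    ContinuousMultilinearMap ℝ (fun _ : Fin m => X) ℝ →ₗ[ℝ] (ℕ → ℝ) where
  toFun f := fun n => f (V p m n)
  map_add' f g := by funext n; simp
  map_smul' c f := by funext n; simp

lemma li_geom :
    LinearIndependent ℝ
      (fun t : Set.Ioo (0 : ℝ) 1 => (fun n : ℕ => (t : ℝ) ^ n)) := by
  have h := linearIndependent_monoidHom (Multiplicative ℕ) ℝ
  have hinj : Function.Injective
      (fun t : Set.Ioo (0 : ℝ) 1 => powersHom ℝ (t : ℝ)) := by
    intro s t hst
    have := (powersHom ℝ).injective hst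
    exact Subtype.ext this
  have h2 := h.comp (fun t : Set.Ioo (0 : ℝ) 1 => powersHom ℝ (t : ℝ)) hinj
  have : (fun t : Set.Ioo (0 : ℝ) 1 => (fun n : ℕ => (t : ℝ) ^ n))
      = (fun f : Multiplicative ℕ →* ℝ => (f : Multiplicative ℕ → ℝ)) ∘
        (fun t : Set.Ioo (0 : ℝ) 1 => powersHom ℝ (t : ℝ)) := by
    funext t
    funext n
    rfl
  rw [this]
  exact h2

lemma li_phi (m : ℕ) (hm : 1 ≤ m) :
    LinearIndependent ℝ (fun t : Set.Ioo (0 : ℝ) 1 => phi p m t.1 t.2) := by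
  refine LinearIndependent.of_comp (Ev p m) ?_
  have : ((Ev p m) ∘ fun t : Set.Ioo (0 : ℝ) 1 => phi p m t.1 t.2)
      = (fun t : Set.Ioo (0 : ℝ) 1 => (fun n : ℕ => (t : ℝ) ^ n)) := by
    funext t
    funext n
    exact phi_V p m hm t.1 t.2 n
  rw [this]
  exact li_geom

/-- A continuous multilinear form on `ℓ_p^m` is determined by its values on
tuples of basis vectors. -/
lemma ev_single_injective (m : ℕ) (hp : p ≠ ⊤) :
    Function.Injective
      (fun f : ContinuousMultilinearMap ℝ (fun _ : Fin m => X) ℝ =>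
        (fun k : Fin m → ℕ => f (fun i => lp.single p (k i) 1))) := by
  intro f g h
  ext x
  classical
  -- truncations
  set T : Finset ℕ → (Fin m → X) :=
    fun s => fun i => ∑ n ∈ s, lp.single p n (x i n) with hT
  have hsum : ∀ i : Fin m, HasSum (fun n : ℕ => lp.single p n (x i n)) (x i) :=
    fun i => lp.hasSum_single hp (x i)
  have htend : Filter.Tendsto T Filter.atTop (nhds x) := by
    rw [tendsto_pi_nhds]
    intro i
    exact hsum i
  have hval : ∀ (F : ContinuousMultilinearMap ℝ (fun _ : Fin m => X) ℝ) (s : Finset ℕ),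
      F (T s) = ∑ r ∈ Fintype.piFinset (fun _ : Fin m => s),
        (∏ i : Fin m, x i (r i)) • F (fun i => lp.single p (r i) 1) := by
    intro F s
    have hsingle : ∀ (i : Fin m) (n : ℕ),
        lp.single p n (x i n) = (x i n) • (lp.single p n (1 : ℝ) : X) := by
      intro i n
      have := lp.single_smul (E := fun _ : ℕ => ℝ) p n (x i n) (1 : ℝ)
      rw [smul_eq_mul, mul_one] at this
      exact this
    have h1 : F (T s) = F (fun i => ∑ n ∈ s, (x i n) • lp.single p n (1 : ℝ)) := by
      congr 1
      funext i
      rw [hT]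
      exact Finset.sum_congr rfl (fun n _ => hsingle i n)
    rw [h1]
    rw [show (F (fun i => ∑ n ∈ s, (x i n) • lp.single p n (1 : ℝ)))
        = F.toMultilinearMap (fun i => ∑ n ∈ s, (x i n) • lp.single p n (1 : ℝ)) from rfl,
      MultilinearMap.map_sum_finset]
    refine Finset.sum_congr rfl (fun r _ => ?_)
    exact F.toMultilinearMap.map_smul_univ (fun i => x i (r i))
      (fun i => lp.single p (r i) 1)
  have hfg : ∀ s : Finset ℕ, f (T s) = g (T s) := by
    intro s
    rw [hval f s, hval g s]
    refine Finset.sum_congr rfl (fun r _ => ?_)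
    have := congrFun h r
    simp only at this
    rw [this]
  have h1 : Filter.Tendsto (fun s => f (T s)) Filter.atTop (nhds (f x)) :=
    (f.cont.tendsto x).comp htend
  have h2 : Filter.Tendsto (fun s => g (T s)) Filter.atTop (nhds (g x)) :=
    (g.cont.tendsto x).comp htend
  rw [show (fun s => f (T s)) = (fun s => g (T s)) from funext hfg] at h1
  exact tendsto_nhds_unique h1 h2

end Stmt15Aux

end Stmt15Aux

/-- Every Hamel basis of the Banach space `𝓛(^m ℓ_p; ℝ)` of continuous
`m`-linear forms on `ℓ_p × ⋯ × ℓ_p` (`1 ≤ p < ∞`, `m ≥ 1`) has cardinality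
exactly `𝔠`, the cardinality of the continuum; equivalently, its Hamel
dimension (linear rank) equals `𝔠`. -/
theorem stmt15 (m : ℕ) (hm : 1 ≤ m) (p : ℝ≥0∞) [Fact (1 ≤ p)] (hp : p ≠ ⊤) :
    Module.rank ℝ
      (ContinuousMultilinearMap ℝ (fun _ : Fin m => lp (fun _ : ℕ => ℝ) p) ℝ) =
      Cardinal.continuum ∧
    ∀ (ι : Type) (_ : Module.Basis ι ℝ
      (ContinuousMultilinearMap ℝ (fun _ : Fin m => lp (fun _ : ℕ => ℝ) p) ℝ)),
      Cardinal.mk ι = Cardinal.continuum := by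
  have hrank : Module.rank ℝ
      (ContinuousMultilinearMap ℝ (fun _ : Fin m => lp (fun _ : ℕ => ℝ) p) ℝ) =
      Cardinal.continuum := by
    refine le_antisymm ?_ ?_
    · -- upper bound: the space injects into a set of cardinality continuum
      refine le_trans (rank_le_card _ _) ?_
      have hinj := Stmt15Aux.ev_single_injective p m hp
      refine le_trans (Cardinal.mk_le_of_injective hinj) ?_
      have h1 : Cardinal.mk ((Fin m → ℕ) → ℝ)
          = Cardinal.mk ℝ ^ Cardinal.mk (Fin m → ℕ) :=
        (Cardinal.power_def ℝ (Fin m → ℕ)).symm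
      rw [h1, Cardinal.mk_real]
      calc Cardinal.continuum ^ Cardinal.mk (Fin m → ℕ)
          ≤ Cardinal.continuum ^ Cardinal.aleph0 :=
            Cardinal.power_le_power_left Cardinal.continuum_ne_zero
              (Cardinal.mk_le_aleph0)
        _ = Cardinal.continuum := Cardinal.continuum_power_aleph0
    · -- lower bound: a continuum-sized linearly independent family
      have hli := Stmt15Aux.li_phi p m hm
      have := hli.cardinal_le_rank
      rwa [Cardinal.mk_Ioo_real zero_lt_one] at this
  refine ⟨hrank, fun ι b => ?_⟩
  rw [b.mk_eq_rank'', hrank]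
end
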